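/- Key step of Theorem 1: for any Hermitian H, H', unitary U, and β > 0, Tr(ω_H H) - Tr(U ω_H U† H') ≤ F(ω_H, H) - F(ω_{H'}, H'), where F(ρ,H) = Tr(ρH) - S(ρ)/β and ω_H is the Gibbs state of H. -/

import Mathlib

open Matrix BigOperators ComplexOrder

variable {n : Type*} [Fintype n] [DecidableEq n]

/-- Real part of the trace. -/
noncomputable def trR {m : Type*} [Fintype m] (A : Matrix m m ℂ) : ℝ := (Matrix.trace A).re

/-- The matrix `exp (-β H)`. -/
noncomputable def mexp {m : Type*} [Fintype m] [DecidableEq m] (β : ℝ) (H : Matrix m m ℂ) :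
    Matrix m m ℂ := NormedSpace.exp ((-β : ℂ) • H)

/-- The Gibbs state `exp (-β H) / Tr (exp (-β H))`. -/
noncomputable def gibbs {m : Type*} [Fintype m] [DecidableEq m] (β : ℝ) (H : Matrix m m ℂ) :
    Matrix m m ℂ := (Matrix.trace (mexp β H))⁻¹ • mexp β H

/-- Von Neumann entropy `-Tr (ρ log ρ)`, via the eigenvalues of a Hermitian matrix. -/
noncomputable def vnEntropy {m : Type*} [Fintype m] [DecidableEq m] {ρ : Matrix m m ℂ}
    (h : ρ.IsHermitian) : ℝ := -∑ i, h.eigenvalues i * Real.log (h.eigenvalues i)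

/-- Free energy `F(ρ,H) = Tr(ρH) - S(ρ)/β`. -/
noncomputable def freeEnergy {m : Type*} [Fintype m] [DecidableEq m] (β : ℝ)
    (ρ H : Matrix m m ℂ) (h : ρ.IsHermitian) : ℝ := trR (ρ * H) - vnEntropy h / β

/-- Matrix logarithm of a Hermitian matrix, via the spectral decomposition. -/
noncomputable def mlog {m : Type*} [Fintype m] [DecidableEq m] {A : Matrix m m ℂ}
    (h : A.IsHermitian) : Matrix m m ℂ :=
  (h.eigenvectorUnitary : Matrix m m ℂ) *
    Matrix.diagonal (fun i => (Real.log (h.eigenvalues i) : ℂ)) *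
      (star (h.eigenvectorUnitary : Matrix m m ℂ))

/-- Quantum relative entropy `D(ρ‖σ) = Tr(ρ log ρ) - Tr(ρ log σ)`. -/
noncomputable def relEnt {m : Type*} [Fintype m] [DecidableEq m] {ρ σ : Matrix m m ℂ}
    (hρ : ρ.IsHermitian) (hσ : σ.IsHermitian) : ℝ :=
  trR (ρ * mlog hρ) - trR (ρ * mlog hσ)

section Helpers

open Polynomial

variable {n : Type*} [Fintype n] [DecidableEq n]

lemma charpoly_conj_unitary (W B : Matrix n n ℂ) (hW : W ∈ Matrix.unitaryGroup n ℂ) :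
    (W * B * star W).charpoly = B.charpoly := by
  have h2 : W * star W = 1 := hW.2
  let f : Matrix n n ℂ →+* Matrix n n ℂ[X] := (C : ℂ →+* ℂ[X]).mapMatrix
  have hcomm : f W * Matrix.scalar n (X : ℂ[X]) = Matrix.scalar n (X : ℂ[X]) * f W :=
    ((Matrix.scalar_commute (X : ℂ[X]) (fun r' => Commute.all _ _) (f W))).eq.symm
  have hWW : f W * f (star W) = 1 := by rw [← _root_.map_mul, h2, _root_.map_one]
  have e1 : f W * Matrix.scalar n (X:ℂ[X]) * f (star W) = Matrix.scalar n (X:ℂ[X]) := by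
    rw [hcomm, mul_assoc, hWW, mul_one]
  have e2 : f (W * B * star W) = f W * f B * f (star W) := by
    rw [_root_.map_mul, _root_.map_mul]
  have key : Matrix.scalar n (X : ℂ[X]) - f (W * B * star W)
      = f W * (Matrix.scalar n (X : ℂ[X]) - f B) * f (star W) := by
    rw [mul_sub, sub_mul, e1, e2]
  unfold Matrix.charpoly charmatrix
  rw [key, det_mul, det_mul]
  have : (f W).det * (f (star W)).det = 1 := by
    rw [← det_mul, ← _root_.map_mul, h2, _root_.map_one, det_one]
  calc (f W).det * (Matrix.scalar n (X:ℂ[X]) - f B).det * (f (star W)).det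
      = ((f W).det * (f (star W)).det) * (Matrix.scalar n (X:ℂ[X]) - f B).det := by ring
    _ = (Matrix.scalar n (X:ℂ[X]) - f B).det := by rw [this, one_mul]

lemma charpoly_diagonal_eq (v : n → ℂ) :
    (Matrix.diagonal v).charpoly = ∏ i, (X - C (v i)) := by
  have : charmatrix (Matrix.diagonal v) = Matrix.diagonal (fun i => (X : ℂ[X]) - C (v i)) := by
    ext i j
    by_cases h : i = j
    · subst h; simp
    · simp [h, Matrix.diagonal_apply_ne _ h]
  rw [Matrix.charpoly, this, det_diagonal]

lemma eig_multiset {A : Matrix n n ℂ} (hA : A.IsHermitian)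
    (W : Matrix n n ℂ) (hW : W ∈ Matrix.unitaryGroup n ℂ) (d : n → ℝ)
    (h : A = W * Matrix.diagonal (fun i => (d i : ℂ)) * star W) :
    Finset.univ.val.map d = Finset.univ.val.map hA.eigenvalues := by
  have e1 : A.charpoly = ∏ i, (X - C ((d i : ℂ))) := by
    rw [h, charpoly_conj_unitary _ _ hW, charpoly_diagonal_eq]
  have e2 : A.charpoly = ∏ i, (X - C ((hA.eigenvalues i : ℂ))) := by
    conv_lhs => rw [hA.spectral_theorem, Unitary.conjStarAlgAut_apply]
    rw [charpoly_conj_unitary _ _ (hA.eigenvectorUnitary).2, charpoly_diagonal_eq]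
    rfl
  have eroots : ∀ g : n → ℝ, (∏ i, ((X:ℂ[X]) - C ((g i : ℂ)))).roots
      = Finset.univ.val.map (fun i => ((g i : ℝ) : ℂ)) := by
    intro g
    have : (∏ i, ((X:ℂ[X]) - C ((g i : ℂ))))
        = ((Finset.univ.val.map (fun i => ((g i:ℝ):ℂ))).map (fun a => X - C a)).prod := by
      rw [Multiset.map_map]; rfl
    rw [this, Polynomial.roots_multiset_prod_X_sub_C]
  have : Finset.univ.val.map (fun i => ((d i : ℝ):ℂ))
      = Finset.univ.val.map (fun i => ((hA.eigenvalues i:ℝ):ℂ)) := by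
    rw [← eroots d, ← eroots hA.eigenvalues, ← e1, ← e2]
  apply Multiset.map_injective Complex.ofReal_injective
  rw [Multiset.map_map, Multiset.map_map]
  exact this

lemma sum_eig {A : Matrix n n ℂ} (hA : A.IsHermitian)
    (W : Matrix n n ℂ) (hW : W ∈ Matrix.unitaryGroup n ℂ) (d : n → ℝ)
    (h : A = W * Matrix.diagonal (fun i => (d i : ℂ)) * star W) (g : ℝ → ℝ) :
    ∑ i, g (hA.eigenvalues i) = ∑ i, g (d i) := by
  have h1 : ∑ i, g (d i) = ((Finset.univ.val.map d).map g).sum := by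
    rw [Multiset.map_map]; rfl
  have h2 : ∑ i, g (hA.eigenvalues i) = ((Finset.univ.val.map hA.eigenvalues).map g).sum := by
    rw [Multiset.map_map]; rfl
  rw [h1, h2, eig_multiset hA W hW d h]

lemma mexp_eq (β : ℝ) {K : Matrix n n ℂ} (hK : K.IsHermitian) :
    mexp β K = (hK.eigenvectorUnitary : Matrix n n ℂ) *
      Matrix.diagonal (fun i => ((Real.exp (-β * hK.eigenvalues i)) : ℂ)) *
      star (hK.eigenvectorUnitary : Matrix n n ℂ) := by
  set V : Matrix n n ℂ := (hK.eigenvectorUnitary : Matrix n n ℂ) with hV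
  have hVU : V ∈ Matrix.unitaryGroup n ℂ := hK.eigenvectorUnitary.2
  have hVinv : V⁻¹ = star V := Matrix.inv_eq_left_inv hVU.1
  have hunit : IsUnit V := ⟨⟨V, star V, hVU.2, hVU.1⟩, rfl⟩
  have hsmul : (-β : ℂ) • K
      = V * Matrix.diagonal (fun i => ((-β * hK.eigenvalues i : ℝ) : ℂ)) * star V := by
    conv_lhs => rw [hK.spectral_theorem, Unitary.conjStarAlgAut_apply]
    rw [← smul_mul_assoc, ← mul_smul_comm]
    congr 2
    rw [← Matrix.diagonal_smul]
    apply congrArg Matrix.diagonal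
    funext i
    simp only [Pi.smul_apply, Function.comp_apply, smul_eq_mul]
    push_cast
    ring_nf
    rfl
  have hexp : (NormedSpace.exp fun i => ((-β * hK.eigenvalues i : ℝ):ℂ))
      = fun i => ((Real.exp (-β * hK.eigenvalues i) : ℝ) : ℂ) := by
    funext i
    rw [Pi.coe_exp, ← Complex.exp_eq_exp_ℂ, ← Complex.ofReal_exp]
  rw [mexp, hsmul, ← hVinv, Matrix.exp_conj V _ hunit, Matrix.exp_diagonal, hexp, hVinv]

lemma trace_conj_diag (W : Matrix n n ℂ) (hW : W ∈ Matrix.unitaryGroup n ℂ) (v : n → ℂ) :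
    Matrix.trace (W * Matrix.diagonal v * star W) = ∑ i, v i := by
  rw [Matrix.trace_mul_cycle, hW.1, one_mul, Matrix.trace_diagonal]

lemma trace_mexp (β : ℝ) {K : Matrix n n ℂ} (hK : K.IsHermitian) :
    Matrix.trace (mexp β K) = ((∑ i, Real.exp (-β * hK.eigenvalues i) : ℝ) : ℂ) := by
  rw [mexp_eq β hK, trace_conj_diag _ hK.eigenvectorUnitary.2]
  push_cast
  rfl

lemma gibbs_eq (β : ℝ) {K : Matrix n n ℂ} (hK : K.IsHermitian) :
    gibbs β K = (hK.eigenvectorUnitary : Matrix n n ℂ) *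
      Matrix.diagonal (fun i => ((Real.exp (-β * hK.eigenvalues i)
        / (∑ j, Real.exp (-β * hK.eigenvalues j)) : ℝ) : ℂ)) *
      star (hK.eigenvectorUnitary : Matrix n n ℂ) := by
  rw [gibbs, trace_mexp β hK, mexp_eq β hK, ← smul_mul_assoc, ← mul_smul_comm,
    ← Matrix.diagonal_smul]
  congr 2
  apply congrArg Matrix.diagonal
  funext i
  simp only [Pi.smul_apply, smul_eq_mul]
  rw [← Complex.ofReal_inv, ← Complex.ofReal_mul]
  rw [div_eq_inv_mul]

lemma trace_conj_diag_mul_conj_diag (P Q : Matrix n n ℂ)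
    (hP : P ∈ Matrix.unitaryGroup n ℂ) (hQ : Q ∈ Matrix.unitaryGroup n ℂ) (a b : n → ℝ) :
    Matrix.trace ((P * Matrix.diagonal (fun i => (a i : ℂ)) * star P) *
      (Q * Matrix.diagonal (fun j => (b j : ℂ)) * star Q)) =
    ((∑ i, ∑ j, a i * b j * Complex.normSq ((star Q * P) j i) : ℝ) : ℂ) := by
  set Da := Matrix.diagonal (fun i => (a i : ℂ))
  set Db := Matrix.diagonal (fun j => (b j : ℂ))
  set M := star Q * P with hM
  have hMstar : star M = star P * Q := by
    rw [hM, StarMul.star_mul, star_star]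
  have hABeq : (P * Da * star P) * (Q * Db * star Q)
      = P * (Da * (star M * (Db * M))) * star P := by
    rw [hMstar, hM]
    simp only [Matrix.mul_assoc]
    rw [show star Q * (P * star P) = star Q by rw [hP.2, mul_one]]
  rw [hABeq, Matrix.trace_mul_cycle, hP.1, one_mul]
  rw [Matrix.trace]
  push_cast
  refine Finset.sum_congr rfl fun i _ => ?_
  rw [Matrix.diag_apply, Matrix.diagonal_mul, Matrix.mul_apply, Finset.mul_sum]
  refine Finset.sum_congr rfl fun j _ => ?_
  rw [Matrix.star_apply, Matrix.diagonal_mul]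
  rw [show star (M j i) * ((↑(b j):ℂ) * M j i) = (↑(b j):ℂ) * (M j i * star (M j i)) by ring]
  rw [Complex.star_def, Complex.mul_conj]
  push_cast
  ring

lemma col_normSq_sum (M : Matrix n n ℂ) (hM : M ∈ Matrix.unitaryGroup n ℂ) (i : n) :
    ∑ j, Complex.normSq (M j i) = 1 := by
  have h : ((∑ j, Complex.normSq (M j i) : ℝ) : ℂ) = 1 := by
    push_cast
    calc ∑ j, (Complex.normSq (M j i) : ℂ) = ∑ j, (star M) i j * M j i := by
          refine Finset.sum_congr rfl fun j _ => ?_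
          rw [Matrix.star_apply, Complex.star_def, mul_comm, Complex.mul_conj]
      _ = (star M * M) i i := (Matrix.mul_apply).symm
      _ = (1 : Matrix n n ℂ) i i := by rw [hM.1]
      _ = 1 := by simp
  exact_mod_cast h

lemma row_normSq_sum (M : Matrix n n ℂ) (hM : M ∈ Matrix.unitaryGroup n ℂ) (j : n) :
    ∑ i, Complex.normSq (M j i) = 1 := by
  have h : ((∑ i, Complex.normSq (M j i) : ℝ) : ℂ) = 1 := by
    push_cast
    calc ∑ i, (Complex.normSq (M j i) : ℂ) = ∑ i, M j i * (star M) i j := by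
          refine Finset.sum_congr rfl fun i _ => ?_
          rw [Matrix.star_apply, Complex.star_def, Complex.mul_conj]
      _ = (M * star M) j j := (Matrix.mul_apply).symm
      _ = (1 : Matrix n n ℂ) j j := by rw [hM.2]
      _ = 1 := by simp
  exact_mod_cast h

lemma klein_sum (p q : n → ℝ) (c : n → n → ℝ) (hp : ∀ i, 0 < p i) (hq : ∀ j, 0 < q j)
    (hc : ∀ i j, 0 ≤ c i j) (hrow : ∀ i, ∑ j, c i j = 1) (hcol : ∀ j, ∑ i, c i j = 1)
    (hpsum : ∑ i, p i = 1) (hqsum : ∑ j, q j = 1) :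
    0 ≤ ∑ i, ∑ j, c i j * (p i * Real.log (p i) - p i * Real.log (q j)) := by
  have key : ∀ i j, c i j * (p i - q j)
      ≤ c i j * (p i * Real.log (p i) - p i * Real.log (q j)) := by
    intro i j
    apply mul_le_mul_of_nonneg_left _ (hc i j)
    have h := Real.log_le_sub_one_of_pos (show 0 < q j / p i from div_pos (hq j) (hp i))
    rw [Real.log_div (ne_of_gt (hq j)) (ne_of_gt (hp i))] at h
    have h2 := mul_le_mul_of_nonneg_left h (le_of_lt (hp i))
    have hpq : p i * (q j / p i - 1) = q j - p i := by field_simp [ne_of_gt (hp i)]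
    nlinarith [hp i]
  have zero_eq : ∑ i, ∑ j, c i j * (p i - q j) = 0 := by
    have e1 : ∑ i, ∑ j, c i j * p i = 1 := by
      calc ∑ i, ∑ j, c i j * p i = ∑ i, (∑ j, c i j) * p i := by
            refine Finset.sum_congr rfl fun i _ => ?_; rw [Finset.sum_mul]
        _ = ∑ i, p i := by refine Finset.sum_congr rfl fun i _ => ?_; rw [hrow i, one_mul]
        _ = 1 := hpsum
    have e2 : ∑ i, ∑ j, c i j * q j = 1 := by
      rw [Finset.sum_comm]
      calc ∑ j, ∑ i, c i j * q j = ∑ j, (∑ i, c i j) * q j := by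
            refine Finset.sum_congr rfl fun j _ => ?_; rw [Finset.sum_mul]
        _ = ∑ j, q j := by refine Finset.sum_congr rfl fun j _ => ?_; rw [hcol j, one_mul]
        _ = 1 := hqsum
    have : ∑ i, ∑ j, c i j * (p i - q j)
        = (∑ i, ∑ j, c i j * p i) - ∑ i, ∑ j, c i j * q j := by
      rw [← Finset.sum_sub_distrib]
      refine Finset.sum_congr rfl fun i _ => ?_
      rw [← Finset.sum_sub_distrib]
      refine Finset.sum_congr rfl fun j _ => ?_
      ring
    rw [this, e1, e2, sub_self]
  rw [← zero_eq]
  exact Finset.sum_le_sum fun i _ => Finset.sum_le_sum fun j _ => key i j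

end Helpers

/-- Key step of Theorem 1:
`Tr(ω_H H) - Tr(U ω_H U† H') ≤ F(ω_H, H) - F(ω_{H'}, H')`. -/
theorem key_step_theorem_one (β : ℝ) (hβ : 0 < β) (H H' U : Matrix n n ℂ)
    (hH : H.IsHermitian) (hH' : H'.IsHermitian) (hU : U ∈ Matrix.unitaryGroup n ℂ)
    (h1 : (gibbs β H).IsHermitian) (h2 : (gibbs β H').IsHermitian) :
    trR (gibbs β H * H) - trR ((U * gibbs β H * star U) * H') ≤
      freeEnergy β (gibbs β H) H h1 - freeEnergy β (gibbs β H') H' h2 := by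
  rcases isEmpty_or_nonempty n with hn | hn
  · simp [trR, freeEnergy, vnEntropy, Matrix.trace]
  -- setup
  set e' : n → ℝ := hH'.eigenvalues with he'
  set V : Matrix n n ℂ := (hH.eigenvectorUnitary : Matrix n n ℂ) with hVdef
  set V' : Matrix n n ℂ := (hH'.eigenvectorUnitary : Matrix n n ℂ) with hV'def
  have hV : V ∈ Matrix.unitaryGroup n ℂ := hH.eigenvectorUnitary.2
  have hV' : V' ∈ Matrix.unitaryGroup n ℂ := hH'.eigenvectorUnitary.2
  set Z : ℝ := ∑ j, Real.exp (-β * hH.eigenvalues j) with hZdef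
  set Z' : ℝ := ∑ j, Real.exp (-β * e' j) with hZ'def
  have hZpos : 0 < Z := Finset.sum_pos (fun _ _ => Real.exp_pos _) Finset.univ_nonempty
  have hZ'pos : 0 < Z' := Finset.sum_pos (fun _ _ => Real.exp_pos _) Finset.univ_nonempty
  set p : n → ℝ := fun i => Real.exp (-β * hH.eigenvalues i) / Z with hpdef
  set q : n → ℝ := fun j => Real.exp (-β * e' j) / Z' with hqdef
  have hppos : ∀ i, 0 < p i := fun i => div_pos (Real.exp_pos _) hZpos
  have hqpos : ∀ j, 0 < q j := fun j => div_pos (Real.exp_pos _) hZ'pos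
  have hpsum : ∑ i, p i = 1 := by
    rw [hpdef, ← Finset.sum_div, ← hZdef, div_self (ne_of_gt hZpos)]
  have hqsum : ∑ j, q j = 1 := by
    rw [hqdef, ← Finset.sum_div, ← hZ'def, div_self (ne_of_gt hZ'pos)]
  have hgibbs : gibbs β H = V * Matrix.diagonal (fun i => (p i : ℂ)) * star V := gibbs_eq β hH
  have hgibbs' : gibbs β H' = V' * Matrix.diagonal (fun j => (q j : ℂ)) * star V' :=
    gibbs_eq β hH'
  have hH'dec : H' = V' * Matrix.diagonal (fun j => (e' j : ℂ)) * star V' :=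
    hH'.spectral_theorem
  -- entropies
  have S1 : vnEntropy h1 = -∑ i, p i * Real.log (p i) := by
    unfold vnEntropy
    congr 1
    exact sum_eig h1 V hV p hgibbs (fun x => x * Real.log x)
  have S2 : vnEntropy h2 = -∑ j, q j * Real.log (q j) := by
    unfold vnEntropy
    congr 1
    exact sum_eig h2 V' hV' q hgibbs' (fun x => x * Real.log x)
  -- trace of gibbs β H' * H'
  have hprod : gibbs β H' * H'
      = V' * Matrix.diagonal (fun j => ((q j : ℂ) * (e' j : ℂ))) * star V' := by
    rw [hgibbs']
    conv_lhs => rw [hH'dec]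
    rw [← Matrix.diagonal_mul_diagonal]
    simp only [Matrix.mul_assoc]
    rw [show star V' * (V' * (Matrix.diagonal (fun j => (e' j : ℂ)) * star V'))
        = Matrix.diagonal (fun j => (e' j : ℂ)) * star V' by
      rw [← Matrix.mul_assoc (star V') V' _, hV'.1, one_mul]]
  have T2 : trR (gibbs β H' * H') = ∑ j, q j * e' j := by
    rw [trR, hprod, trace_conj_diag _ hV']
    rw [show ∑ j, ((q j : ℂ) * (e' j : ℂ)) = ((∑ j, q j * e' j : ℝ) : ℂ) by push_cast; rfl]
    exact Complex.ofReal_re _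
  -- trace of U (gibbs β H) U† H'
  set M : Matrix n n ℂ := star V' * (U * V) with hMdef
  have hUV : U * V ∈ Matrix.unitaryGroup n ℂ := mul_mem hU hV
  have hMmem : M ∈ Matrix.unitaryGroup n ℂ := mul_mem (Unitary.star_mem hV') hUV
  set c : n → n → ℝ := fun i j => Complex.normSq (M j i) with hcdef
  have hcnn : ∀ i j, 0 ≤ c i j := fun i j => Complex.normSq_nonneg _
  have hrow : ∀ i, ∑ j, c i j = 1 := fun i => col_normSq_sum M hMmem i
  have hcol : ∀ j, ∑ i, c i j = 1 := fun j => row_normSq_sum M hMmem j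
  have hconj : U * gibbs β H * star U
      = (U * V) * Matrix.diagonal (fun i => (p i : ℂ)) * star (U * V) := by
    rw [hgibbs, StarMul.star_mul U V]
    simp only [Matrix.mul_assoc]
  have T1 : trR ((U * gibbs β H * star U) * H') = ∑ i, ∑ j, p i * e' j * c i j := by
    rw [trR, hconj]
    conv_lhs => rw [hH'dec]
    rw [trace_conj_diag_mul_conj_diag (U * V) V' hUV hV' p e']
    exact Complex.ofReal_re _
  -- log relation
  have hβe' : ∀ j, β * e' j = -Real.log (q j) - Real.log Z' := by
    intro j
    have : Real.log (q j) = -β * e' j - Real.log Z' := by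
      rw [hqdef]
      rw [Real.log_div (ne_of_gt (Real.exp_pos _)) (ne_of_gt hZ'pos), Real.log_exp]
    linarith [this]
  -- scaled inequality
  have hcp : ∑ i, ∑ j, c i j * p i = 1 := by
    calc ∑ i, ∑ j, c i j * p i = ∑ i, (∑ j, c i j) * p i := by
          refine Finset.sum_congr rfl fun i _ => ?_; rw [Finset.sum_mul]
      _ = ∑ i, p i := by refine Finset.sum_congr rfl fun i _ => ?_; rw [hrow i, one_mul]
      _ = 1 := hpsum
  have hLHS : β * (∑ j, q j * e' j) + ∑ j, q j * Real.log (q j) = -Real.log Z' := by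
    rw [Finset.mul_sum]
    have step : ∑ j, β * (q j * e' j)
        = ∑ j, (-(q j * Real.log (q j)) - Real.log Z' * q j) := by
      refine Finset.sum_congr rfl fun j _ => ?_
      have h5 : β * (q j * e' j) = (β * e' j) * q j := by ring
      rw [h5, hβe' j]
      ring
    rw [step, Finset.sum_sub_distrib]
    rw [← Finset.mul_sum, hqsum, mul_one, Finset.sum_neg_distrib]
    ring
  set K : ℝ := ∑ i, ∑ j, c i j * (p i * Real.log (p i) - p i * Real.log (q j)) with hKdef
  have hK : 0 ≤ K := klein_sum p q c hppos hqpos hcnn hrow hcol hpsum hqsum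
  have hRHS : β * (∑ i, ∑ j, p i * e' j * c i j) + ∑ i, p i * Real.log (p i)
      = K - Real.log Z' := by
    have step : ∀ i j, β * (p i * e' j * c i j)
        = c i j * (p i * Real.log (p i) - p i * Real.log (q j))
          - c i j * (p i * Real.log (p i)) - Real.log Z' * (c i j * p i) := by
      intro i j
      have h5 : β * (p i * e' j * c i j) = (β * e' j) * (p i * c i j) := by ring
      rw [h5, hβe' j]
      ring
    have expand : β * (∑ i, ∑ j, p i * e' j * c i j)
        = ∑ i, ∑ j, (c i j * (p i * Real.log (p i) - p i * Real.log (q j))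
            - c i j * (p i * Real.log (p i)) - Real.log Z' * (c i j * p i)) := by
      rw [Finset.mul_sum]
      refine Finset.sum_congr rfl fun i _ => ?_
      rw [Finset.mul_sum]
      exact Finset.sum_congr rfl fun j _ => step i j
    have sum2 : ∑ i, ∑ j, c i j * (p i * Real.log (p i)) = ∑ i, p i * Real.log (p i) := by
      refine Finset.sum_congr rfl fun i _ => ?_
      rw [← Finset.sum_mul, hrow i, one_mul]
    have sum3 : ∑ i, ∑ j, Real.log Z' * (c i j * p i) = Real.log Z' := by
      calc ∑ i, ∑ j, Real.log Z' * (c i j * p i)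
          = Real.log Z' * ∑ i, ∑ j, c i j * p i := by
            rw [Finset.mul_sum]
            refine Finset.sum_congr rfl fun i _ => ?_
            rw [Finset.mul_sum]
        _ = Real.log Z' := by rw [hcp, mul_one]
    have split : ∑ i, ∑ j, (c i j * (p i * Real.log (p i) - p i * Real.log (q j))
            - c i j * (p i * Real.log (p i)) - Real.log Z' * (c i j * p i))
        = K - (∑ i, ∑ j, c i j * (p i * Real.log (p i)))
          - ∑ i, ∑ j, Real.log Z' * (c i j * p i) := by
      rw [hKdef, ← Finset.sum_sub_distrib, ← Finset.sum_sub_distrib]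
      refine Finset.sum_congr rfl fun i _ => ?_
      rw [← Finset.sum_sub_distrib, ← Finset.sum_sub_distrib]
    rw [expand, split, sum2, sum3]
    ring
  -- conclude
  have hmul : β * (∑ j, q j * e' j) + ∑ j, q j * Real.log (q j)
      ≤ β * (∑ i, ∑ j, p i * e' j * c i j) + ∑ i, p i * Real.log (p i) := by
    rw [hLHS, hRHS]
    linarith [hK]
  have hdivided : (∑ j, q j * e' j) + (∑ j, q j * Real.log (q j)) / β
      ≤ (∑ i, ∑ j, p i * e' j * c i j) + (∑ i, p i * Real.log (p i)) / β := by
    have h6 := (div_le_div_iff_of_pos_right hβ).mpr hmul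
    have e6 : ∀ X S : ℝ, (β * X + S) / β = X + S / β := by
      intro X S
      field_simp
    rw [e6, e6] at h6
    exact h6
  unfold freeEnergy
  rw [S1, S2, T1, T2]
  have n1 : (-∑ i, p i * Real.log (p i)) / β = -((∑ i, p i * Real.log (p i)) / β) :=
    neg_div _ _
  have n2 : (-∑ j, q j * Real.log (q j)) / β = -((∑ j, q j * Real.log (q j)) / β) :=
    neg_div _ _
  linarith [hdivided, n1, n2]
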